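/- Let P(B,A,Φ) be a trivial quantum principal bundle and β : A → Γ_B linear with β(1)=0. Then ω(a) = Σ Φ⁻¹(a₍₁₎) j(β(a₍₂₎)) Φ(a₍₃₎) + Σ Φ⁻¹(a₍₁₎) dΦ(a₍₂₎) satisfies the three connection-form conditions: ω(1)=0, ~(ω(a)) = 1⊗a − ε(a)⊗1, and Δ_R∘ω = (ω⊗id)∘Ad_R. -/

import Mathlib

/- STATEMENT 16: Let P(B,A,Φ) be a trivial quantum principal bundle and
β : A → Γ_B linear with β(1)=0.  Then
ω(a) = Σ Φ⁻¹(a₍₁₎) j(β(a₍₂₎)) Φ(a₍₃₎) + Σ Φ⁻¹(a₍₁₎) dΦ(a₍₂₎)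
satisfies ω(1)=0, ~(ω(a)) = 1⊗a − ε(a)⊗1, and Δ_R∘ω = (ω⊗id)∘Ad_R.
Here j(β(·)) is modelled by a map β : A → Γ_P = P⊗P whose values are
horizontal (killed by ~) and invariant (coinvariant for the diagonal
coaction), i.e. lie in the one-forms of the base. -/

open TensorProduct

noncomputable def AdR (k A : Type*) [Field k] [Ring A] [HopfAlgebra k A] :
    A →ₗ[k] A ⊗[k] A :=
  (LinearMap.lTensor A (LinearMap.mul' k A)) ∘ₗ
    (TensorProduct.assoc k A A A).toLinearMap ∘ₗ
    (LinearMap.rTensor A (TensorProduct.comm k A A).toLinearMap) ∘ₗ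
    (TensorProduct.assoc k A A A).symm.toLinearMap ∘ₗ
    (LinearMap.rTensor (A ⊗[k] A) (HopfAlgebra.antipode (R := k) (A := A))) ∘ₗ
    (LinearMap.lTensor A (Coalgebra.comul (R := k) (A := A))) ∘ₗ
    (Coalgebra.comul (R := k) (A := A))

noncomputable def dUniv (k P : Type*) [Field k] [Ring P] [Algebra k P] :
    P →ₗ[k] P ⊗[k] P :=
  TensorProduct.mk k P P 1 - (TensorProduct.mk k P P).flip 1

noncomputable def leftAct (k P : Type*) [Field k] [Ring P] [Algebra k P] :
    P ⊗[k] (P ⊗[k] P) →ₗ[k] P ⊗[k] P :=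
  (LinearMap.rTensor P (LinearMap.mul' k P)) ∘ₗ
    (TensorProduct.assoc k P P P).symm.toLinearMap

noncomputable def rightAct (k P : Type*) [Field k] [Ring P] [Algebra k P] :
    (P ⊗[k] P) ⊗[k] P →ₗ[k] P ⊗[k] P :=
  (LinearMap.lTensor P (LinearMap.mul' k P)) ∘ₗ
    (TensorProduct.assoc k P P P).toLinearMap

noncomputable def tildeMap {k A P : Type*} [Field k] [Ring A] [HopfAlgebra k A]
    [Ring P] [Algebra k P] (ΔR : P →ₐ[k] P ⊗[k] A) :
    P ⊗[k] P →ₗ[k] P ⊗[k] A :=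
  (LinearMap.rTensor A (LinearMap.mul' k P)) ∘ₗ
    (TensorProduct.assoc k P P A).symm.toLinearMap ∘ₗ
    (LinearMap.lTensor P ΔR.toLinearMap)

noncomputable def diagCoaction {k A P : Type*} [Field k] [Ring A] [HopfAlgebra k A]
    [Ring P] [Algebra k P] (ΔR : P →ₐ[k] P ⊗[k] A) :
    P ⊗[k] P →ₗ[k] (P ⊗[k] P) ⊗[k] A :=
  (LinearMap.lTensor (P ⊗[k] P) (LinearMap.mul' k A)) ∘ₗ
    (TensorProduct.tensorTensorTensorComm k P A P A).toLinearMap ∘ₗ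
    (TensorProduct.map ΔR.toLinearMap ΔR.toLinearMap)

set_option maxHeartbeats 1000000
set_option synthInstance.maxHeartbeats 400000

open Coalgebra

namespace QPBaux


variable {k : Type*} [Field k]

section Conv
variable {A : Type*} [AddCommGroup A] [Module k A] [Coalgebra k A]
variable {R S : Type*} [Ring R] [Algebra k R] [Ring S] [Algebra k S]

/-- Convolution product on `A →ₗ[k] R`. -/
noncomputable def conv (f g : A →ₗ[k] R) : A →ₗ[k] R :=
  LinearMap.mul' k R ∘ₗ TensorProduct.map f g ∘ₗ Coalgebra.comul

/-- Convolution unit. -/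
noncomputable def cunit : A →ₗ[k] R := Algebra.linearMap k R ∘ₗ Coalgebra.counit

lemma map_comp_comul_left (X : A ⊗[k] A →ₗ[k] R) (h : A →ₗ[k] R) :
    TensorProduct.map (X ∘ₗ comul) h
      = TensorProduct.map X h ∘ₗ (comul (R := k) (A := A)).rTensor A := by
  rw [LinearMap.rTensor, ← TensorProduct.map_comp, LinearMap.comp_id]

lemma map_comp_comul_right (f : A →ₗ[k] R) (X : A ⊗[k] A →ₗ[k] R) :
    TensorProduct.map f (X ∘ₗ comul)
      = TensorProduct.map f X ∘ₗ (comul (R := k) (A := A)).lTensor A := by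
  rw [LinearMap.lTensor, ← TensorProduct.map_comp, LinearMap.comp_id]

lemma conv_conv_left (f g : A →ₗ[k] R) (h : A →ₗ[k] R) :
    conv (conv f g) h =
      (LinearMap.mul' k R ∘ₗ TensorProduct.map (LinearMap.mul' k R ∘ₗ TensorProduct.map f g) h)
        ∘ₗ (comul (R := k) (A := A)).rTensor A ∘ₗ comul := by
  show LinearMap.mul' k R ∘ₗ
      TensorProduct.map ((LinearMap.mul' k R ∘ₗ TensorProduct.map f g) ∘ₗ comul) h ∘ₗ comul = _
  rw [map_comp_comul_left]
  rfl

lemma conv_conv_right (f : A →ₗ[k] R) (g h : A →ₗ[k] R) :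
    conv f (conv g h) =
      (LinearMap.mul' k R ∘ₗ TensorProduct.map f (LinearMap.mul' k R ∘ₗ TensorProduct.map g h))
        ∘ₗ (comul (R := k) (A := A)).lTensor A ∘ₗ comul := by
  show LinearMap.mul' k R ∘ₗ
      TensorProduct.map f ((LinearMap.mul' k R ∘ₗ TensorProduct.map g h) ∘ₗ comul) ∘ₗ comul = _
  rw [map_comp_comul_right]
  rfl

lemma conv_assoc (f g h : A →ₗ[k] R) : conv (conv f g) h = conv f (conv g h) := by
  rw [conv_conv_left, conv_conv_right]
  have key : (LinearMap.mul' k R ∘ₗ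
        TensorProduct.map (LinearMap.mul' k R ∘ₗ TensorProduct.map f g) h) =
      (LinearMap.mul' k R ∘ₗ TensorProduct.map f (LinearMap.mul' k R ∘ₗ TensorProduct.map g h))
        ∘ₗ (TensorProduct.assoc k A A A).toLinearMap := by
    apply TensorProduct.ext_threefold
    intro a b c
    simp [mul_assoc]
  rw [key]
  have : (TensorProduct.assoc k A A A).toLinearMap ∘ₗ
      (comul (R := k) (A := A)).rTensor A ∘ₗ comul =
      (comul (R := k) (A := A)).lTensor A ∘ₗ comul := Coalgebra.coassoc
  exact congrArg (fun X => (LinearMap.mul' k R ∘ₗ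
    TensorProduct.map f (LinearMap.mul' k R ∘ₗ TensorProduct.map g h)) ∘ₗ X) this

lemma conv_cunit_left (f : A →ₗ[k] R) : conv cunit f = f := by
  unfold conv cunit
  rw [show TensorProduct.map (Algebra.linearMap k R ∘ₗ counit) f
      = TensorProduct.map (Algebra.linearMap k R) f ∘ₗ
        (counit (R := k) (A := A)).rTensor A by
    rw [LinearMap.rTensor, ← TensorProduct.map_comp, LinearMap.comp_id]]
  show (LinearMap.mul' k R ∘ₗ TensorProduct.map (Algebra.linearMap k R) f) ∘ₗ
      ((counit (R := k) (A := A)).rTensor A ∘ₗ comul) = f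
  rw [Coalgebra.rTensor_counit_comp_comul]
  ext a
  simp

lemma conv_cunit_right (f : A →ₗ[k] R) : conv f cunit = f := by
  unfold conv cunit
  rw [show TensorProduct.map f (Algebra.linearMap k R ∘ₗ counit)
      = TensorProduct.map f (Algebra.linearMap k R) ∘ₗ
        (counit (R := k) (A := A)).lTensor A by
    rw [LinearMap.lTensor, ← TensorProduct.map_comp, LinearMap.comp_id]]
  show (LinearMap.mul' k R ∘ₗ TensorProduct.map f (Algebra.linearMap k R)) ∘ₗ
      ((counit (R := k) (A := A)).lTensor A ∘ₗ comul) = f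
  rw [Coalgebra.lTensor_counit_comp_comul]
  ext a
  simp [Algebra.algebraMap_eq_smul_one, mul_smul_comm]

lemma conv_zero_left (g : A →ₗ[k] R) : conv 0 g = 0 := by
  simp [conv, TensorProduct.map_zero_left]

lemma conv_zero_right (f : A →ₗ[k] R) : conv f 0 = 0 := by
  simp [conv, TensorProduct.map_zero_right]

lemma conv_add_left (f f' g : A →ₗ[k] R) : conv (f + f') g = conv f g + conv f' g := by
  simp [conv, TensorProduct.map_add_left, LinearMap.comp_add, LinearMap.add_comp]

lemma conv_add_right (f g g' : A →ₗ[k] R) : conv f (g + g') = conv f g + conv f g' := by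
  simp [conv, TensorProduct.map_add_right, LinearMap.comp_add, LinearMap.add_comp]

lemma conv_sub_left (f f' g : A →ₗ[k] R) : conv (f - f') g = conv f g - conv f' g := by
  have := conv_add_left (f - f') f' g
  rw [sub_add_cancel] at this
  rw [this]; abel

lemma conv_sub_right (f g g' : A →ₗ[k] R) : conv f (g - g') = conv f g - conv f g' := by
  have := conv_add_right f (g - g') g'
  rw [sub_add_cancel] at this
  rw [this]; abel

/-- Composing a convolution with an algebra homomorphism. -/
lemma comp_conv (φ : R →ₐ[k] S) (f g : A →ₗ[k] R) :
    φ.toLinearMap ∘ₗ conv f g = conv (φ.toLinearMap ∘ₗ f) (φ.toLinearMap ∘ₗ g) := by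
  unfold conv
  rw [TensorProduct.map_comp]
  show (φ.toLinearMap ∘ₗ LinearMap.mul' k R) ∘ₗ TensorProduct.map f g ∘ₗ comul =
    (LinearMap.mul' k S ∘ₗ TensorProduct.map φ.toLinearMap φ.toLinearMap) ∘ₗ
      TensorProduct.map f g ∘ₗ comul
  congr 1
  apply TensorProduct.ext'
  intro x y
  simp

lemma comp_cunit (φ : R →ₐ[k] S) : φ.toLinearMap ∘ₗ (cunit (A := A)) = cunit := by
  unfold cunit
  show (φ.toLinearMap ∘ₗ Algebra.linearMap k R) ∘ₗ counit = _
  congr 1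
  ext c
  simp

/-- `D ∘ (ι∘f ⋆ X) = (D∘ι∘f) ⋆ (D∘X)` given a one-sided measuring property of `D`. -/
lemma comp_conv_measuring_left {P' : Type*} [Ring P'] [Algebra k P']
    (D : R →ₗ[k] S) (ι : P' →ₗ[k] R)
    (hm : D ∘ₗ LinearMap.mul' k R ∘ₗ TensorProduct.map ι LinearMap.id =
          LinearMap.mul' k S ∘ₗ TensorProduct.map (D ∘ₗ ι) D)
    (f : A →ₗ[k] P') (X : A →ₗ[k] R) :
    D ∘ₗ conv (ι ∘ₗ f) X = conv (D ∘ₗ ι ∘ₗ f) (D ∘ₗ X) := by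
  unfold conv
  rw [show TensorProduct.map (ι ∘ₗ f) X =
      TensorProduct.map ι LinearMap.id ∘ₗ TensorProduct.map f X by
    rw [← TensorProduct.map_comp, LinearMap.id_comp],
    show TensorProduct.map (D ∘ₗ ι ∘ₗ f) (D ∘ₗ X) =
      TensorProduct.map (D ∘ₗ ι) D ∘ₗ TensorProduct.map f X from
    (TensorProduct.map_comp (D ∘ₗ ι) D f X)]
  show (D ∘ₗ LinearMap.mul' k R ∘ₗ TensorProduct.map ι LinearMap.id) ∘ₗ
      TensorProduct.map f X ∘ₗ comul =
    (LinearMap.mul' k S ∘ₗ TensorProduct.map (D ∘ₗ ι) D) ∘ₗ TensorProduct.map f X ∘ₗ comul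
  rw [hm]

lemma comp_conv_measuring_right {P' : Type*} [Ring P'] [Algebra k P']
    (D : R →ₗ[k] S) (ι : P' →ₗ[k] R)
    (hm : D ∘ₗ LinearMap.mul' k R ∘ₗ TensorProduct.map LinearMap.id ι =
          LinearMap.mul' k S ∘ₗ TensorProduct.map D (D ∘ₗ ι))
    (X : A →ₗ[k] R) (f : A →ₗ[k] P') :
    D ∘ₗ conv X (ι ∘ₗ f) = conv (D ∘ₗ X) (D ∘ₗ ι ∘ₗ f) := by
  unfold conv
  rw [show TensorProduct.map X (ι ∘ₗ f) =
      TensorProduct.map LinearMap.id ι ∘ₗ TensorProduct.map X f by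
    rw [← TensorProduct.map_comp, LinearMap.id_comp],
    show TensorProduct.map (D ∘ₗ X) (D ∘ₗ ι ∘ₗ f) =
      TensorProduct.map D (D ∘ₗ ι) ∘ₗ TensorProduct.map X f from
    (TensorProduct.map_comp D (D ∘ₗ ι) X f)]
  show (D ∘ₗ LinearMap.mul' k R ∘ₗ TensorProduct.map LinearMap.id ι) ∘ₗ
      TensorProduct.map X f ∘ₗ comul =
    (LinearMap.mul' k S ∘ₗ TensorProduct.map D (D ∘ₗ ι)) ∘ₗ TensorProduct.map X f ∘ₗ comul
  rw [hm]

lemma conv_inv_unique {F Fi Fi' : A →ₗ[k] R}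
    (h1 : conv Fi' F = cunit) (h2 : conv F Fi = cunit) : Fi' = Fi := by
  calc Fi' = conv Fi' cunit := (conv_cunit_right Fi').symm
    _ = conv Fi' (conv F Fi) := by rw [h2]
    _ = conv (conv Fi' F) Fi := (conv_assoc _ _ _).symm
    _ = conv cunit Fi := by rw [h1]
    _ = Fi := conv_cunit_left Fi

lemma conv_apply_one {A : Type*} [Ring A] [Bialgebra k A] (f g : A →ₗ[k] R) :
    conv f g 1 = f 1 * g 1 := by
  simp [conv, Bialgebra.comul_one, Algebra.TensorProduct.one_def]

end Conv


variable {k A P : Type*} [Field k] [Ring A] [HopfAlgebra k A] [Ring P] [Algebra k P]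

/-- `p ↦ p ⊗ 1 : P → P ⊗ P` -/
noncomputable def i1 (k P : Type*) [Field k] [Ring P] [Algebra k P] :
    P →ₐ[k] P ⊗[k] P := Algebra.TensorProduct.includeLeft
noncomputable def i2 (k P : Type*) [Field k] [Ring P] [Algebra k P] :
    P →ₐ[k] P ⊗[k] P := Algebra.TensorProduct.includeRight
noncomputable def jL (k P A : Type*) [Field k] [Ring P] [Algebra k P] [Ring A] [Algebra k A] :
    P →ₐ[k] P ⊗[k] A := Algebra.TensorProduct.includeLeft
noncomputable def jR (k P A : Type*) [Field k] [Ring P] [Algebra k P] [Ring A] [Algebra k A] :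
    A →ₐ[k] P ⊗[k] A := Algebra.TensorProduct.includeRight
noncomputable def iR (k P A : Type*) [Field k] [Ring P] [Algebra k P] [Ring A] [Algebra k A] :
    (P ⊗[k] P) →ₐ[k] (P ⊗[k] P) ⊗[k] A := Algebra.TensorProduct.includeLeft
noncomputable def iA (k P A : Type*) [Field k] [Ring P] [Algebra k P] [Ring A] [Algebra k A] :
    A →ₐ[k] (P ⊗[k] P) ⊗[k] A := Algebra.TensorProduct.includeRight
noncomputable def ps1 (k P A : Type*) [Field k] [Ring P] [Algebra k P] [Ring A] [Algebra k A] :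
    P ⊗[k] A →ₐ[k] (P ⊗[k] P) ⊗[k] A :=
  Algebra.TensorProduct.map (i1 k P) (AlgHom.id k A)
noncomputable def ps2 (k P A : Type*) [Field k] [Ring P] [Algebra k P] [Ring A] [Algebra k A] :
    P ⊗[k] A →ₐ[k] (P ⊗[k] P) ⊗[k] A :=
  Algebra.TensorProduct.map (i2 k P) (AlgHom.id k A)

@[simp] lemma i1_apply (p : P) : i1 k P p = p ⊗ₜ[k] 1 := rfl
@[simp] lemma i2_apply (p : P) : i2 k P p = 1 ⊗ₜ[k] p := rfl
@[simp] lemma jL_apply (p : P) : jL k P A p = p ⊗ₜ[k] 1 := rfl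
@[simp] lemma jR_apply (a : A) : jR k P A a = 1 ⊗ₜ[k] a := rfl
@[simp] lemma iR_apply (m : P ⊗[k] P) : iR k P A m = m ⊗ₜ[k] 1 := rfl
@[simp] lemma iA_apply (a : A) : iA k P A a = 1 ⊗ₜ[k] a := rfl
@[simp] lemma ps1_apply (p : P) (a : A) : ps1 k P A (p ⊗ₜ[k] a) = (p ⊗ₜ[k] (1:P)) ⊗ₜ[k] a := rfl
@[simp] lemma ps2_apply (p : P) (a : A) : ps2 k P A (p ⊗ₜ[k] a) = ((1:P) ⊗ₜ[k] p) ⊗ₜ[k] a := rfl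

variable (ΔR : P →ₐ[k] P ⊗[k] A)

/-! ### tildeMap lemmas -/

/-- the mixed multiplication `P ⊗ (P⊗A) → P⊗A`. -/
noncomputable def lam (k P A : Type*) [Field k] [Ring P] [Algebra k P] [Ring A] [Algebra k A] :
    P ⊗[k] (P ⊗[k] A) →ₗ[k] P ⊗[k] A :=
  (LinearMap.rTensor A (LinearMap.mul' k P)) ∘ₗ (TensorProduct.assoc k P P A).symm.toLinearMap

@[simp] lemma lam_tmul (x q : P) (a : A) :
    lam k P A (x ⊗ₜ (q ⊗ₜ a)) = (x * q) ⊗ₜ a := by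
  simp [lam]

lemma tilde_tmul (x y : P) : tildeMap ΔR (x ⊗ₜ y) = lam k P A (x ⊗ₜ ΔR y) := rfl

lemma lam_mul_left (p x : P) (w : P ⊗[k] A) :
    lam k P A ((p * x) ⊗ₜ w) = (p ⊗ₜ[k] (1:A)) * lam k P A (x ⊗ₜ w) := by
  induction w using TensorProduct.induction_on with
  | zero => simp
  | tmul q a => simp [Algebra.TensorProduct.tmul_mul_tmul, mul_assoc]
  | add w1 w2 h1 h2 => simp [tmul_add, h1, h2, mul_add]

lemma lam_mul_right (x : P) (w u : P ⊗[k] A) :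
    lam k P A (x ⊗ₜ (w * u)) = lam k P A (x ⊗ₜ w) * u := by
  induction w using TensorProduct.induction_on with
  | zero => simp
  | tmul q a =>
    induction u using TensorProduct.induction_on with
    | zero => simp
    | tmul r b => simp [Algebra.TensorProduct.tmul_mul_tmul, mul_assoc]
    | add u1 u2 h1 h2 => simp [mul_add, tmul_add, h1, h2]
  | add w1 w2 h1 h2 => simp [add_mul, tmul_add, h1, h2]

@[simp] lemma lam_one_right (x : P) : lam k P A (x ⊗ₜ 1) = x ⊗ₜ[k] (1:A) := by
  rw [Algebra.TensorProduct.one_def]; simp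

@[simp] lemma lam_one_left (w : P ⊗[k] A) : lam k P A ((1:P) ⊗ₜ w) = w := by
  induction w using TensorProduct.induction_on with
  | zero => simp
  | tmul q a => simp
  | add w1 w2 h1 h2 => simp [tmul_add, h1, h2]

lemma tilde_i1 : tildeMap ΔR ∘ₗ (i1 k P).toLinearMap = (jL k P A).toLinearMap := by
  ext p; simp [tilde_tmul, map_one]

lemma tilde_i2 : tildeMap ΔR ∘ₗ (i2 k P).toLinearMap = ΔR.toLinearMap := by
  ext q; simp [tilde_tmul]

lemma tilde_one : tildeMap ΔR 1 = 1 := by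
  rw [Algebra.TensorProduct.one_def, tilde_tmul, map_one, lam_one_left]

lemma tilde_measure_left :
    tildeMap ΔR ∘ₗ LinearMap.mul' k (P ⊗[k] P) ∘ₗ
        TensorProduct.map (i1 k P).toLinearMap LinearMap.id =
      LinearMap.mul' k (P ⊗[k] A) ∘ₗ
        TensorProduct.map (tildeMap ΔR ∘ₗ (i1 k P).toLinearMap) (tildeMap ΔR) := by
  apply TensorProduct.ext'
  intro p m
  induction m using TensorProduct.induction_on with
  | zero => simp
  | tmul x y =>
    simp only [LinearMap.comp_apply, TensorProduct.map_tmul, LinearMap.mul'_apply,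
      LinearMap.id_apply, i1_apply, AlgHom.toLinearMap_apply]
    rw [Algebra.TensorProduct.tmul_mul_tmul, one_mul, tilde_tmul, tilde_tmul, tilde_tmul,
      map_one, lam_one_right, lam_mul_left]
  | add m1 m2 h1 h2 => simp only [map_add, tmul_add] at h1 h2 ⊢; rw [h1, h2]

lemma tilde_measure_right :
    tildeMap ΔR ∘ₗ LinearMap.mul' k (P ⊗[k] P) ∘ₗ
        TensorProduct.map LinearMap.id (i2 k P).toLinearMap =
      LinearMap.mul' k (P ⊗[k] A) ∘ₗ
        TensorProduct.map (tildeMap ΔR) (tildeMap ΔR ∘ₗ (i2 k P).toLinearMap) := by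
  apply TensorProduct.ext'
  intro m q
  induction m using TensorProduct.induction_on with
  | zero => simp
  | tmul x y =>
    simp only [LinearMap.comp_apply, TensorProduct.map_tmul, LinearMap.mul'_apply,
      LinearMap.id_apply, i2_apply, AlgHom.toLinearMap_apply]
    rw [Algebra.TensorProduct.tmul_mul_tmul, mul_one, tilde_tmul, tilde_tmul, tilde_tmul,
      map_mul, lam_mul_right, lam_one_left]
  | add m1 m2 h1 h2 => simp only [map_add, add_tmul] at h1 h2 ⊢; rw [h1, h2]

/-! ### diagCoaction lemmas -/

noncomputable def psi (k P A : Type*) [Field k] [Ring P] [Algebra k P] [Ring A] [Algebra k A] :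
    (P ⊗[k] A) ⊗[k] (P ⊗[k] A) →ₗ[k] (P ⊗[k] P) ⊗[k] A :=
  (LinearMap.lTensor (P ⊗[k] P) (LinearMap.mul' k A)) ∘ₗ
    (TensorProduct.tensorTensorTensorComm k P A P A).toLinearMap

@[simp] lemma psi_tmul (p q : P) (a b : A) :
    psi k P A ((p ⊗ₜ a) ⊗ₜ (q ⊗ₜ b)) = (p ⊗ₜ[k] q) ⊗ₜ[k] (a * b) := by
  simp [psi]

lemma diag_tmul (x y : P) : diagCoaction ΔR (x ⊗ₜ y) = psi k P A (ΔR x ⊗ₜ ΔR y) := rfl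

lemma psi_mul_left (u v w : P ⊗[k] A) :
    psi k P A ((u * v) ⊗ₜ w) = ps1 k P A u * psi k P A (v ⊗ₜ w) := by
  induction u using TensorProduct.induction_on with
  | zero => simp
  | tmul p a =>
    induction v using TensorProduct.induction_on with
    | zero => simp
    | tmul x b =>
      induction w using TensorProduct.induction_on with
      | zero => simp
      | tmul y c =>
        simp [Algebra.TensorProduct.tmul_mul_tmul, mul_assoc]
      | add w1 w2 h1 h2 => simp only [tmul_add, map_add, mul_add] at h1 h2 ⊢; rw [h1, h2]
    | add v1 v2 h1 h2 =>
      simp only [mul_add, add_tmul, map_add] at h1 h2 ⊢; rw [h1, h2]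
  | add u1 u2 h1 h2 =>
    simp only [add_mul, add_tmul, map_add] at h1 h2 ⊢; rw [h1, h2]

lemma psi_mul_right (v w u : P ⊗[k] A) :
    psi k P A (v ⊗ₜ (w * u)) = psi k P A (v ⊗ₜ w) * ps2 k P A u := by
  induction v using TensorProduct.induction_on with
  | zero => simp
  | tmul x b =>
    induction w using TensorProduct.induction_on with
    | zero => simp
    | tmul y c =>
      induction u using TensorProduct.induction_on with
      | zero => simp
      | tmul q a =>
        simp [Algebra.TensorProduct.tmul_mul_tmul, mul_assoc]
      | add u1 u2 h1 h2 => simp only [mul_add, tmul_add, map_add] at h1 h2 ⊢; rw [h1, h2]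
    | add w1 w2 h1 h2 => simp only [add_mul, tmul_add, map_add] at h1 h2 ⊢; rw [h1, h2]
  | add v1 v2 h1 h2 => simp only [add_tmul, map_add, add_mul] at h1 h2 ⊢; rw [h1, h2]

@[simp] lemma psi_one_right (u : P ⊗[k] A) : psi k P A (u ⊗ₜ 1) = ps1 k P A u := by
  rw [Algebra.TensorProduct.one_def]
  induction u using TensorProduct.induction_on with
  | zero => simp
  | tmul p a => simp
  | add u1 u2 h1 h2 => simp only [add_tmul, map_add] at h1 h2 ⊢; rw [h1, h2]

@[simp] lemma psi_one_left (w : P ⊗[k] A) : psi k P A (1 ⊗ₜ w) = ps2 k P A w := by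
  rw [Algebra.TensorProduct.one_def]
  induction w using TensorProduct.induction_on with
  | zero => simp
  | tmul p a => simp
  | add w1 w2 h1 h2 => simp only [tmul_add, map_add] at h1 h2 ⊢; rw [h1, h2]

lemma diag_i1 : diagCoaction ΔR ∘ₗ (i1 k P).toLinearMap =
    (ps1 k P A).toLinearMap ∘ₗ ΔR.toLinearMap := by
  ext p; simp [diag_tmul, map_one]

lemma diag_i2 : diagCoaction ΔR ∘ₗ (i2 k P).toLinearMap =
    (ps2 k P A).toLinearMap ∘ₗ ΔR.toLinearMap := by
  ext q; simp [diag_tmul, map_one]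

lemma diag_one : diagCoaction ΔR 1 = 1 := by
  rw [Algebra.TensorProduct.one_def, diag_tmul, map_one, psi_one_left, map_one]

lemma diag_measure_left :
    diagCoaction ΔR ∘ₗ LinearMap.mul' k (P ⊗[k] P) ∘ₗ
        TensorProduct.map (i1 k P).toLinearMap LinearMap.id =
      LinearMap.mul' k ((P ⊗[k] P) ⊗[k] A) ∘ₗ
        TensorProduct.map (diagCoaction ΔR ∘ₗ (i1 k P).toLinearMap) (diagCoaction ΔR) := by
  apply TensorProduct.ext'
  intro p m
  induction m using TensorProduct.induction_on with
  | zero => simp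
  | tmul x y =>
    simp only [LinearMap.comp_apply, TensorProduct.map_tmul, LinearMap.mul'_apply,
      LinearMap.id_apply, i1_apply, AlgHom.toLinearMap_apply]
    rw [Algebra.TensorProduct.tmul_mul_tmul, one_mul, diag_tmul, diag_tmul, diag_tmul,
      map_mul, map_one, psi_one_right, psi_mul_left]
  | add m1 m2 h1 h2 => simp only [map_add, tmul_add] at h1 h2 ⊢; rw [h1, h2]

lemma diag_measure_right :
    diagCoaction ΔR ∘ₗ LinearMap.mul' k (P ⊗[k] P) ∘ₗ
        TensorProduct.map LinearMap.id (i2 k P).toLinearMap =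
      LinearMap.mul' k ((P ⊗[k] P) ⊗[k] A) ∘ₗ
        TensorProduct.map (diagCoaction ΔR) (diagCoaction ΔR ∘ₗ (i2 k P).toLinearMap) := by
  apply TensorProduct.ext'
  intro m q
  induction m using TensorProduct.induction_on with
  | zero => simp
  | tmul x y =>
    simp only [LinearMap.comp_apply, TensorProduct.map_tmul, LinearMap.mul'_apply,
      LinearMap.id_apply, i2_apply, AlgHom.toLinearMap_apply]
    rw [Algebra.TensorProduct.tmul_mul_tmul, mul_one, diag_tmul, diag_tmul, diag_tmul,
      map_mul, map_one, psi_one_left, psi_mul_right]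
  | add m1 m2 h1 h2 => simp only [map_add, add_tmul] at h1 h2 ⊢; rw [h1, h2]


section Layer3
variable {k A P : Type*} [Field k] [Ring A] [HopfAlgebra k A] [Ring P] [Algebra k P]

lemma conv_antipode_id :
    conv (HopfAlgebra.antipode (R := k) (A := A)) LinearMap.id = cunit :=
  HopfAlgebra.mul_antipode_rTensor_comul

lemma rTensor_comul_eq_conv (f : A →ₗ[k] P) :
    f.rTensor A ∘ₗ Coalgebra.comul =
      conv ((jL k P A).toLinearMap ∘ₗ f) (jR k P A).toLinearMap := by
  have h : f.rTensor A = LinearMap.mul' k (P ⊗[k] A) ∘ₗ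
      TensorProduct.map ((jL k P A).toLinearMap ∘ₗ f) (jR k P A).toLinearMap := by
    apply TensorProduct.ext'
    intro a b
    simp [Algebra.TensorProduct.tmul_mul_tmul, LinearMap.rTensor]
  show f.rTensor A ∘ₗ Coalgebra.comul = (LinearMap.mul' k (P ⊗[k] A) ∘ₗ
      TensorProduct.map ((jL k P A).toLinearMap ∘ₗ f) (jR k P A).toLinearMap) ∘ₗ Coalgebra.comul
  rw [h]

variable (ΔR : P →ₐ[k] P ⊗[k] A)

/-- The key lemma: the coaction on `Φ⁻¹` is via the antipode. -/
lemma deltaR_phinv (Φ Φinv : A →ₗ[k] P)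
    (hint : ΔR.toLinearMap ∘ₗ Φ = (Φ.rTensor A) ∘ₗ Coalgebra.comul)
    (hΦ₁ : conv Φ Φinv = cunit) (hΦ₂ : conv Φinv Φ = cunit) :
    ΔR.toLinearMap ∘ₗ Φinv =
      conv ((jR k P A).toLinearMap ∘ₗ HopfAlgebra.antipode (R := k) (A := A))
        ((jL k P A).toLinearMap ∘ₗ Φinv) := by
  have hF : ΔR.toLinearMap ∘ₗ Φ =
      conv ((jL k P A).toLinearMap ∘ₗ Φ) (jR k P A).toLinearMap :=
    hint.trans (rTensor_comul_eq_conv Φ)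
  have h2 : conv (ΔR.toLinearMap ∘ₗ Φ) (ΔR.toLinearMap ∘ₗ Φinv) = cunit := by
    rw [← comp_conv ΔR, hΦ₁, comp_cunit]
  have h1 : conv (conv ((jR k P A).toLinearMap ∘ₗ HopfAlgebra.antipode (R := k) (A := A))
      ((jL k P A).toLinearMap ∘ₗ Φinv)) (ΔR.toLinearMap ∘ₗ Φ) = cunit := by
    rw [hF, conv_assoc, ← conv_assoc ((jL k P A).toLinearMap ∘ₗ Φinv)
      ((jL k P A).toLinearMap ∘ₗ Φ) (jR k P A).toLinearMap,
      ← comp_conv (jL k P A) Φinv Φ, hΦ₂, comp_cunit (jL k P A), conv_cunit_left]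
    have : conv ((jR k P A).toLinearMap ∘ₗ HopfAlgebra.antipode (R := k) (A := A))
        ((jR k P A).toLinearMap ∘ₗ LinearMap.id) = cunit := by
      rw [← comp_conv (jR k P A), conv_antipode_id, comp_cunit]
    exact this
  exact (conv_inv_unique h1 h2).symm

lemma leftAct_eq :
    leftAct k P = LinearMap.mul' k (P ⊗[k] P) ∘ₗ
      TensorProduct.map (i1 k P).toLinearMap LinearMap.id := by
  apply TensorProduct.ext'
  intro p m
  induction m using TensorProduct.induction_on with
  | zero => simp only [tmul_zero, map_zero]
  | tmul x y =>
    simp [leftAct, Algebra.TensorProduct.tmul_mul_tmul]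
  | add m1 m2 h1 h2 => simp only [tmul_add, map_add] at h1 h2 ⊢; rw [h1, h2]

lemma rightAct_eq :
    rightAct k P = LinearMap.mul' k (P ⊗[k] P) ∘ₗ
      TensorProduct.map LinearMap.id (i2 k P).toLinearMap := by
  apply TensorProduct.ext'
  intro m q
  induction m using TensorProduct.induction_on with
  | zero => simp only [zero_tmul, map_zero]
  | tmul x y =>
    simp [rightAct, Algebra.TensorProduct.tmul_mul_tmul]
  | add m1 m2 h1 h2 => simp only [add_tmul, map_add] at h1 h2 ⊢; rw [h1, h2]

lemma tilde_cunit : tildeMap ΔR ∘ₗ (cunit : A →ₗ[k] P ⊗[k] P) = cunit := by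
  unfold cunit
  show (tildeMap ΔR ∘ₗ Algebra.linearMap k (P ⊗[k] P)) ∘ₗ Coalgebra.counit = _
  congr 1
  apply LinearMap.ext
  intro c
  simp [Algebra.algebraMap_eq_smul_one, tilde_one]

lemma diag_cunit : diagCoaction ΔR ∘ₗ (cunit : A →ₗ[k] P ⊗[k] P) = cunit := by
  unfold cunit
  show (diagCoaction ΔR ∘ₗ Algebra.linearMap k (P ⊗[k] P)) ∘ₗ Coalgebra.counit = _
  congr 1
  apply LinearMap.ext
  intro c
  simp [Algebra.algebraMap_eq_smul_one, diag_one]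

lemma ps1_jL : (ps1 k P A).toLinearMap ∘ₗ (jL k P A).toLinearMap =
    (iR k P A).toLinearMap ∘ₗ (i1 k P).toLinearMap := by
  apply LinearMap.ext; intro p; simp

lemma ps1_jR : (ps1 k P A).toLinearMap ∘ₗ (jR k P A).toLinearMap =
    (iA k P A).toLinearMap := by
  apply LinearMap.ext; intro a
  simp [Algebra.TensorProduct.one_def]

lemma ps2_jL : (ps2 k P A).toLinearMap ∘ₗ (jL k P A).toLinearMap =
    (iR k P A).toLinearMap ∘ₗ (i2 k P).toLinearMap := by
  apply LinearMap.ext; intro p; simp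

lemma ps2_jR : (ps2 k P A).toLinearMap ∘ₗ (jR k P A).toLinearMap =
    (iA k P A).toLinearMap := by
  apply LinearMap.ext; intro a
  simp [Algebra.TensorProduct.one_def]

/-- `(f ⊗ id) ∘ Ad_R` expressed as a convolution. -/
lemma rTensor_adR (f : A →ₗ[k] P ⊗[k] P) :
    f.rTensor A ∘ₗ AdR k A =
      conv ((iA k P A).toLinearMap ∘ₗ HopfAlgebra.antipode (R := k) (A := A))
        (conv ((iR k P A).toLinearMap ∘ₗ f) (iA k P A).toLinearMap) := by
  rw [conv_conv_right]
  show (f.rTensor A ∘ₗ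
      ((LinearMap.lTensor A (LinearMap.mul' k A)) ∘ₗ
        (TensorProduct.assoc k A A A).toLinearMap ∘ₗ
        (LinearMap.rTensor A (TensorProduct.comm k A A).toLinearMap) ∘ₗ
        (TensorProduct.assoc k A A A).symm.toLinearMap ∘ₗ
        (LinearMap.rTensor (A ⊗[k] A) (HopfAlgebra.antipode (R := k) (A := A))))) ∘ₗ
      (LinearMap.lTensor A (Coalgebra.comul (R := k) (A := A))) ∘ₗ
      (Coalgebra.comul (R := k) (A := A)) = _
  congr 1
  apply TensorProduct.ext'
  intro a m
  induction m using TensorProduct.induction_on with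
  | zero => simp only [tmul_zero, map_zero]
  | tmul b c =>
    simp only [LinearMap.comp_apply, LinearMap.rTensor_tmul, LinearMap.lTensor_tmul,
      TensorProduct.assoc_symm_tmul, TensorProduct.assoc_tmul, TensorProduct.map_tmul,
      TensorProduct.comm_tmul, LinearMap.mul'_apply, AlgHom.toLinearMap_apply,
      iA_apply, iR_apply]
    rw [Algebra.TensorProduct.tmul_mul_tmul, Algebra.TensorProduct.tmul_mul_tmul]
    simp
  | add m1 m2 h1 h2 => simp only [tmul_add, map_add] at h1 h2 ⊢; rw [h1, h2]

end Layer3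

end QPBaux

open QPBaux in
theorem connection_form_from_gauge_field
    {k A P : Type*} [Field k] [Ring A] [HopfAlgebra k A]
    [Ring P] [Algebra k P]
    (ΔR : P →ₐ[k] P ⊗[k] A)
    (hcoassoc : (TensorProduct.assoc k P A A).toLinearMap ∘ₗ
        (ΔR.toLinearMap.rTensor A) ∘ₗ ΔR.toLinearMap =
        ((Coalgebra.comul (R := k) (A := A)).lTensor P) ∘ₗ ΔR.toLinearMap)
    (hcounit : (TensorProduct.rid k P).toLinearMap ∘ₗ
        ((Coalgebra.counit (R := k) (A := A)).lTensor P) ∘ₗ ΔR.toLinearMap =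
        LinearMap.id)
    (Φ Φinv : A →ₗ[k] P)
    (hint : ΔR.toLinearMap ∘ₗ Φ = (Φ.rTensor A) ∘ₗ Coalgebra.comul)
    (hΦone : Φ 1 = 1)
    (hΦ₁ : (LinearMap.mul' k P) ∘ₗ (TensorProduct.map Φ Φinv) ∘ₗ Coalgebra.comul =
        (Algebra.linearMap k P) ∘ₗ Coalgebra.counit)
    (hΦ₂ : (LinearMap.mul' k P) ∘ₗ (TensorProduct.map Φinv Φ) ∘ₗ Coalgebra.comul =
        (Algebra.linearMap k P) ∘ₗ Coalgebra.counit)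
    -- β : A → Γ_B (included into Γ_P = P⊗P): horizontal, invariant, β(1)=0
    (β : A →ₗ[k] P ⊗[k] P)
    (hβhor : tildeMap ΔR ∘ₗ β = 0)
    (hβinv : ∀ a : A, diagCoaction ΔR (β a) = (β a) ⊗ₜ[k] 1)
    (hβone : β 1 = 0) :
    let ωtriv : A →ₗ[k] P ⊗[k] P :=
      (leftAct k P) ∘ₗ (TensorProduct.map Φinv ((dUniv k P) ∘ₗ Φ)) ∘ₗ
        Coalgebra.comul
    let ω : A →ₗ[k] P ⊗[k] P :=
      (leftAct k P) ∘ₗ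
        (TensorProduct.map Φinv ((rightAct k P) ∘ₗ (TensorProduct.map β Φ))) ∘ₗ
        (LinearMap.lTensor A (Coalgebra.comul (R := k) (A := A))) ∘ₗ
        (Coalgebra.comul (R := k) (A := A)) + ωtriv
    (ω 1 = 0) ∧
    (tildeMap ΔR ∘ₗ ω =
      TensorProduct.mk k P A 1 -
        (Algebra.linearMap k (P ⊗[k] A)) ∘ₗ Coalgebra.counit) ∧
    (diagCoaction ΔR ∘ₗ ω = (ω.rTensor A) ∘ₗ AdR k A) := by
  intro ωtriv ω
  have hΦ₁' : conv Φ Φinv = cunit := hΦ₁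
  have hΦ₂' : conv Φinv Φ = cunit := hΦ₂
  -- notation-level abbreviations (all definitional)
  have hωdef : ω = (leftAct k P) ∘ₗ
      (TensorProduct.map Φinv ((rightAct k P) ∘ₗ (TensorProduct.map β Φ))) ∘ₗ
      (LinearMap.lTensor A (Coalgebra.comul (R := k) (A := A))) ∘ₗ
      (Coalgebra.comul (R := k) (A := A)) +
      ((leftAct k P) ∘ₗ (TensorProduct.map Φinv ((dUniv k P) ∘ₗ Φ)) ∘ₗ
        Coalgebra.comul) := rfl
  -- pointwise action lemmas
  have leftAct_apply : ∀ (p : P) (m : P ⊗[k] P),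
      leftAct k P (p ⊗ₜ m) = (p ⊗ₜ[k] (1:P)) * m := by
    intro p m
    rw [leftAct_eq]
    simp
  have rightAct_apply : ∀ (m : P ⊗[k] P) (q : P),
      rightAct k P (m ⊗ₜ q) = m * ((1:P) ⊗ₜ[k] q) := by
    intro m q
    rw [rightAct_eq]
    simp
  -- ω in convolution form
  have innerX : rightAct k P ∘ₗ TensorProduct.map β Φ =
      LinearMap.mul' k (P ⊗[k] P) ∘ₗ TensorProduct.map β ((i2 k P).toLinearMap ∘ₗ Φ) := by
    apply TensorProduct.ext'
    intro b c
    simp [rightAct_apply]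
  have inner1 : leftAct k P ∘ₗ TensorProduct.map Φinv (rightAct k P ∘ₗ TensorProduct.map β Φ) =
      LinearMap.mul' k (P ⊗[k] P) ∘ₗ
        TensorProduct.map ((i1 k P).toLinearMap ∘ₗ Φinv)
          (LinearMap.mul' k (P ⊗[k] P) ∘ₗ
            TensorProduct.map β ((i2 k P).toLinearMap ∘ₗ Φ)) := by
    apply TensorProduct.ext'
    intro a m
    simp only [LinearMap.comp_apply, TensorProduct.map_tmul, LinearMap.mul'_apply,
      leftAct_apply, AlgHom.toLinearMap_apply, i1_apply]
    rw [show (rightAct k P) ((TensorProduct.map β Φ) m) =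
        (LinearMap.mul' k (P ⊗[k] P))
          ((TensorProduct.map β ((i2 k P).toLinearMap ∘ₗ Φ)) m) from
      LinearMap.congr_fun innerX m]
  have hterm1 : (leftAct k P) ∘ₗ
      (TensorProduct.map Φinv ((rightAct k P) ∘ₗ (TensorProduct.map β Φ))) ∘ₗ
      (LinearMap.lTensor A (Coalgebra.comul (R := k) (A := A))) ∘ₗ
      (Coalgebra.comul (R := k) (A := A)) =
      conv ((i1 k P).toLinearMap ∘ₗ Φinv)
        (conv β ((i2 k P).toLinearMap ∘ₗ Φ)) := by
    rw [conv_conv_right]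
    show (leftAct k P ∘ₗ
      TensorProduct.map Φinv (rightAct k P ∘ₗ TensorProduct.map β Φ)) ∘ₗ
      (LinearMap.lTensor A (Coalgebra.comul (R := k) (A := A))) ∘ₗ
      (Coalgebra.comul (R := k) (A := A)) = _
    rw [inner1]
  have inner2 : leftAct k P ∘ₗ TensorProduct.map Φinv (dUniv k P ∘ₗ Φ) =
      (LinearMap.mul' k (P ⊗[k] P) ∘ₗ
        TensorProduct.map ((i1 k P).toLinearMap ∘ₗ Φinv) ((i2 k P).toLinearMap ∘ₗ Φ)) -
      (LinearMap.mul' k (P ⊗[k] P) ∘ₗ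
        TensorProduct.map ((i1 k P).toLinearMap ∘ₗ Φinv) ((i1 k P).toLinearMap ∘ₗ Φ)) := by
    apply TensorProduct.ext'
    intro a b
    simp [leftAct_apply, dUniv, tmul_sub, mul_sub]
  have hterm2 : (leftAct k P) ∘ₗ (TensorProduct.map Φinv ((dUniv k P) ∘ₗ Φ)) ∘ₗ
      Coalgebra.comul =
      conv ((i1 k P).toLinearMap ∘ₗ Φinv) ((i2 k P).toLinearMap ∘ₗ Φ) -
      conv ((i1 k P).toLinearMap ∘ₗ Φinv) ((i1 k P).toLinearMap ∘ₗ Φ) := by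
    show (leftAct k P ∘ₗ TensorProduct.map Φinv (dUniv k P ∘ₗ Φ)) ∘ₗ
        Coalgebra.comul = _
    rw [inner2, LinearMap.sub_comp]
    rfl
  have hcun1 : conv ((i1 k P).toLinearMap ∘ₗ Φinv) ((i1 k P).toLinearMap ∘ₗ Φ) = cunit := by
    rw [← comp_conv (i1 k P), hΦ₂', comp_cunit]
  have hω : ω = conv ((i1 k P).toLinearMap ∘ₗ Φinv)
        (conv β ((i2 k P).toLinearMap ∘ₗ Φ)) +
      (conv ((i1 k P).toLinearMap ∘ₗ Φinv) ((i2 k P).toLinearMap ∘ₗ Φ) - cunit) := by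
    rw [hωdef, hterm1, hterm2, hcun1]
  have hΦinv1 : Φinv 1 = 1 := by
    have h := LinearMap.congr_fun hΦ₂ 1
    simpa [Bialgebra.comul_one, Algebra.TensorProduct.one_def, hΦone] using h
  refine ⟨?_, ?_, ?_⟩
  · -- ω 1 = 0
    rw [hω]
    simp only [LinearMap.add_apply, LinearMap.sub_apply, conv_apply_one, hβone, zero_mul,
      mul_zero, LinearMap.comp_apply, hΦinv1, hΦone, map_one, one_mul, mul_one]
    simp [cunit, Bialgebra.counit_one]
  · -- tilde condition
    have e1 : tildeMap ΔR ∘ₗ conv ((i1 k P).toLinearMap ∘ₗ Φinv)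
        (conv β ((i2 k P).toLinearMap ∘ₗ Φ)) = 0 := by
      rw [comp_conv_measuring_left (tildeMap ΔR) (i1 k P).toLinearMap
        (tilde_measure_left ΔR) Φinv (conv β ((i2 k P).toLinearMap ∘ₗ Φ))]
      have hin : tildeMap ΔR ∘ₗ conv β ((i2 k P).toLinearMap ∘ₗ Φ) = 0 := by
        rw [comp_conv_measuring_right (tildeMap ΔR) (i2 k P).toLinearMap
          (tilde_measure_right ΔR) β Φ, hβhor, conv_zero_left]
      rw [hin, conv_zero_right]
    have hF : ΔR.toLinearMap ∘ₗ Φ =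
        conv ((jL k P A).toLinearMap ∘ₗ Φ) (jR k P A).toLinearMap :=
      hint.trans (rTensor_comul_eq_conv Φ)
    have e2 : tildeMap ΔR ∘ₗ conv ((i1 k P).toLinearMap ∘ₗ Φinv)
        ((i2 k P).toLinearMap ∘ₗ Φ) = (jR k P A).toLinearMap := by
      rw [comp_conv_measuring_left (tildeMap ΔR) (i1 k P).toLinearMap
        (tilde_measure_left ΔR) Φinv ((i2 k P).toLinearMap ∘ₗ Φ)]
      rw [show tildeMap ΔR ∘ₗ (i1 k P).toLinearMap ∘ₗ Φinv =
          (tildeMap ΔR ∘ₗ (i1 k P).toLinearMap) ∘ₗ Φinv from rfl, tilde_i1]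
      rw [show tildeMap ΔR ∘ₗ (i2 k P).toLinearMap ∘ₗ Φ =
          (tildeMap ΔR ∘ₗ (i2 k P).toLinearMap) ∘ₗ Φ from rfl, tilde_i2, hF]
      rw [← conv_assoc, ← comp_conv (jL k P A), hΦ₂', comp_cunit, conv_cunit_left]
    have e3 : tildeMap ΔR ∘ₗ (cunit : A →ₗ[k] P ⊗[k] P) = cunit := tilde_cunit ΔR
    rw [hω, LinearMap.comp_add, LinearMap.comp_sub, e1, e2, e3, zero_add]
    ext a
    simp [cunit]
  · -- coaction condition
    have hF : ΔR.toLinearMap ∘ₗ Φ =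
        conv ((jL k P A).toLinearMap ∘ₗ Φ) (jR k P A).toLinearMap :=
      hint.trans (rTensor_comul_eq_conv Φ)
    have hDF : ΔR.toLinearMap ∘ₗ Φinv =
        conv ((jR k P A).toLinearMap ∘ₗ HopfAlgebra.antipode (R := k) (A := A))
          ((jL k P A).toLinearMap ∘ₗ Φinv) :=
      deltaR_phinv ΔR Φ Φinv hint hΦ₁' hΦ₂'
    -- the lifted maps
    have hA : diagCoaction ΔR ∘ₗ (i1 k P).toLinearMap ∘ₗ Φinv =
        conv ((iA k P A).toLinearMap ∘ₗ HopfAlgebra.antipode (R := k) (A := A))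
          ((iR k P A).toLinearMap ∘ₗ (i1 k P).toLinearMap ∘ₗ Φinv) := by
      rw [show diagCoaction ΔR ∘ₗ (i1 k P).toLinearMap ∘ₗ Φinv =
          (diagCoaction ΔR ∘ₗ (i1 k P).toLinearMap) ∘ₗ Φinv from rfl, diag_i1]
      rw [show ((ps1 k P A).toLinearMap ∘ₗ ΔR.toLinearMap) ∘ₗ Φinv =
          (ps1 k P A).toLinearMap ∘ₗ (ΔR.toLinearMap ∘ₗ Φinv) from rfl, hDF,
        comp_conv]
      rw [show (ps1 k P A).toLinearMap ∘ₗ (jR k P A).toLinearMap ∘ₗ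
            HopfAlgebra.antipode (R := k) (A := A) =
          ((ps1 k P A).toLinearMap ∘ₗ (jR k P A).toLinearMap) ∘ₗ
            HopfAlgebra.antipode (R := k) (A := A) from rfl, ps1_jR]
      rw [show (ps1 k P A).toLinearMap ∘ₗ (jL k P A).toLinearMap ∘ₗ Φinv =
          ((ps1 k P A).toLinearMap ∘ₗ (jL k P A).toLinearMap) ∘ₗ Φinv from rfl, ps1_jL]
      rfl
    have hβR : diagCoaction ΔR ∘ₗ β = (iR k P A).toLinearMap ∘ₗ β := by
      apply LinearMap.ext
      intro a
      simp [hβinv a]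
    have hG : diagCoaction ΔR ∘ₗ (i2 k P).toLinearMap ∘ₗ Φ =
        conv ((iR k P A).toLinearMap ∘ₗ (i2 k P).toLinearMap ∘ₗ Φ)
          (iA k P A).toLinearMap := by
      rw [show diagCoaction ΔR ∘ₗ (i2 k P).toLinearMap ∘ₗ Φ =
          (diagCoaction ΔR ∘ₗ (i2 k P).toLinearMap) ∘ₗ Φ from rfl, diag_i2]
      rw [show ((ps2 k P A).toLinearMap ∘ₗ ΔR.toLinearMap) ∘ₗ Φ =
          (ps2 k P A).toLinearMap ∘ₗ (ΔR.toLinearMap ∘ₗ Φ) from rfl, hF, comp_conv]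
      rw [show (ps2 k P A).toLinearMap ∘ₗ (jL k P A).toLinearMap ∘ₗ Φ =
          ((ps2 k P A).toLinearMap ∘ₗ (jL k P A).toLinearMap) ∘ₗ Φ from rfl, ps2_jL,
        ps2_jR]
      rfl
    have d1 : diagCoaction ΔR ∘ₗ conv ((i1 k P).toLinearMap ∘ₗ Φinv)
        (conv β ((i2 k P).toLinearMap ∘ₗ Φ)) =
        conv (conv ((iA k P A).toLinearMap ∘ₗ HopfAlgebra.antipode (R := k) (A := A))
            ((iR k P A).toLinearMap ∘ₗ (i1 k P).toLinearMap ∘ₗ Φinv))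
          (conv ((iR k P A).toLinearMap ∘ₗ β)
            (conv ((iR k P A).toLinearMap ∘ₗ (i2 k P).toLinearMap ∘ₗ Φ)
              (iA k P A).toLinearMap)) := by
      rw [comp_conv_measuring_left (diagCoaction ΔR) (i1 k P).toLinearMap
        (diag_measure_left ΔR) Φinv (conv β ((i2 k P).toLinearMap ∘ₗ Φ)), hA]
      rw [comp_conv_measuring_right (diagCoaction ΔR) (i2 k P).toLinearMap
        (diag_measure_right ΔR) β Φ, hβR, hG]
    have d2 : diagCoaction ΔR ∘ₗ conv ((i1 k P).toLinearMap ∘ₗ Φinv)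
        ((i2 k P).toLinearMap ∘ₗ Φ) =
        conv (conv ((iA k P A).toLinearMap ∘ₗ HopfAlgebra.antipode (R := k) (A := A))
            ((iR k P A).toLinearMap ∘ₗ (i1 k P).toLinearMap ∘ₗ Φinv))
          (conv ((iR k P A).toLinearMap ∘ₗ (i2 k P).toLinearMap ∘ₗ Φ)
            (iA k P A).toLinearMap) := by
      rw [comp_conv_measuring_left (diagCoaction ΔR) (i1 k P).toLinearMap
        (diag_measure_left ΔR) Φinv ((i2 k P).toLinearMap ∘ₗ Φ), hA]
      rw [show diagCoaction ΔR ∘ₗ (i2 k P).toLinearMap ∘ₗ Φ =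
          (diagCoaction ΔR ∘ₗ (i2 k P).toLinearMap) ∘ₗ Φ from rfl]
      rw [show (diagCoaction ΔR ∘ₗ (i2 k P).toLinearMap) ∘ₗ Φ =
          diagCoaction ΔR ∘ₗ (i2 k P).toLinearMap ∘ₗ Φ from rfl, hG]
    have d3 : diagCoaction ΔR ∘ₗ (cunit : A →ₗ[k] P ⊗[k] P) = cunit := diag_cunit ΔR
    -- the right-hand side
    have hωL : (iR k P A).toLinearMap ∘ₗ ω =
        conv ((iR k P A).toLinearMap ∘ₗ (i1 k P).toLinearMap ∘ₗ Φinv)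
          (conv ((iR k P A).toLinearMap ∘ₗ β)
            ((iR k P A).toLinearMap ∘ₗ (i2 k P).toLinearMap ∘ₗ Φ)) +
        (conv ((iR k P A).toLinearMap ∘ₗ (i1 k P).toLinearMap ∘ₗ Φinv)
          ((iR k P A).toLinearMap ∘ₗ (i2 k P).toLinearMap ∘ₗ Φ) - cunit) := by
      rw [hω, LinearMap.comp_add, LinearMap.comp_sub, comp_conv (iR k P A),
        comp_conv (iR k P A) β ((i2 k P).toLinearMap ∘ₗ Φ),
        comp_conv (iR k P A) ((i1 k P).toLinearMap ∘ₗ Φinv) ((i2 k P).toLinearMap ∘ₗ Φ),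
        comp_cunit (iR k P A)]
    have hSiA : conv ((iA k P A).toLinearMap ∘ₗ HopfAlgebra.antipode (R := k) (A := A))
        (iA k P A).toLinearMap = cunit := by
      have h : conv ((iA k P A).toLinearMap ∘ₗ HopfAlgebra.antipode (R := k) (A := A))
          ((iA k P A).toLinearMap ∘ₗ LinearMap.id) = cunit := by
        rw [← comp_conv (iA k P A), conv_antipode_id, comp_cunit]
      exact h
    rw [rTensor_adR ω, hωL, hω, LinearMap.comp_add, LinearMap.comp_sub, d1, d2, d3,
      conv_add_left, conv_sub_left, conv_cunit_left,
      conv_add_right, conv_sub_right, hSiA,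
      conv_assoc ((iR k P A).toLinearMap ∘ₗ (i1 k P).toLinearMap ∘ₗ Φinv)
        (conv ((iR k P A).toLinearMap ∘ₗ β)
          ((iR k P A).toLinearMap ∘ₗ (i2 k P).toLinearMap ∘ₗ Φ)) (iA k P A).toLinearMap,
      conv_assoc ((iR k P A).toLinearMap ∘ₗ β)
        ((iR k P A).toLinearMap ∘ₗ (i2 k P).toLinearMap ∘ₗ Φ) (iA k P A).toLinearMap,
      ← conv_assoc ((iA k P A).toLinearMap ∘ₗ HopfAlgebra.antipode (R := k) (A := A))
        ((iR k P A).toLinearMap ∘ₗ (i1 k P).toLinearMap ∘ₗ Φinv),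
      conv_assoc ((iR k P A).toLinearMap ∘ₗ (i1 k P).toLinearMap ∘ₗ Φinv)
        ((iR k P A).toLinearMap ∘ₗ (i2 k P).toLinearMap ∘ₗ Φ) (iA k P A).toLinearMap,
      ← conv_assoc ((iA k P A).toLinearMap ∘ₗ HopfAlgebra.antipode (R := k) (A := A))
        ((iR k P A).toLinearMap ∘ₗ (i1 k P).toLinearMap ∘ₗ Φinv)]
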